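/- arXiv:1311.2294 — 6 statements merged into one kernel-verified Lean document; each statement's English description precedes it below -/
import Mathlib

section
/- Let n, k be naturals with k < n - k and let L_{k,n} be the level graph. If A, B ∈ [X]^{n-k} with |A ∩ B| = i, then the graph distance satisfies ‖AB‖ ≤ 2⌈(n - k - i)/(n - 2k)⌉. -/
/-- Vertices of the level graph: k-element and (n-k)-element subsets of {1,…,n}. -/
def LevelVert (n k : ℕ) := {A : Finset (Fin n) // A.card = k ∨ A.card = n - k}

/-- The (k,n)-level graph L_{k,n}. -/
def levelGraph (n k : ℕ) : SimpleGraph (LevelVert n k) where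
  Adj A B := A ≠ B ∧
    ((A.1.card = k ∧ B.1.card = n - k ∧ A.1 ⊆ B.1) ∨
     (B.1.card = k ∧ A.1.card = n - k ∧ B.1 ⊆ A.1))
  symm := by constructor; intro A B h; exact ⟨Ne.symm h.1, h.2.elim Or.inr Or.inl⟩
  loopless := by constructor; intro A h; exact h.1 rfl

/-- The initial vertex P = {1,…,k} (as a subset of Fin n). -/
def Pset (n k : ℕ) : Finset (Fin n) := Finset.univ.filter (fun x => (x : ℕ) < k)

lemma levelAdj (n k : ℕ) (hk : k < n - k) (C A : LevelVert n k)
    (hC : C.1.card = k) (hA : A.1.card = n - k) (hsub : C.1 ⊆ A.1) :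
    (levelGraph n k).Adj C A := by
  refine ⟨?_, Or.inl ⟨hC, hA, hsub⟩⟩
  intro h; rw [h] at hC; omega

lemma levelKey (n k : ℕ) (hk : k < n - k) :
    ∀ m : ℕ, ∀ A B : LevelVert n k, A.1.card = n - k → B.1.card = n - k →
      n - k - (A.1 ∩ B.1).card = m →
      ∃ p : (levelGraph n k).Walk A B,
        p.length ≤ 2 * ((m + (n - 2 * k) - 1) / (n - 2 * k)) := by
  intro m
  induction m using Nat.strong_induction_on with
  | _ m ih =>
    intro A B hA hB hm
    set d := n - 2 * k with hd
    have hdpos : 0 < d := by omega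
    have hicard : (A.1 ∩ B.1).card ≤ n - k := by
      calc (A.1 ∩ B.1).card ≤ A.1.card := Finset.card_le_card (Finset.inter_subset_left)
        _ = n - k := hA
    by_cases h0 : m = 0
    · -- then A = B
      have hi : (A.1 ∩ B.1).card = n - k := by omega
      have h1 : A.1 ∩ B.1 = A.1 :=
        Finset.eq_of_subset_of_card_le Finset.inter_subset_left (by omega)
      have h2 : A.1 ⊆ B.1 := by rw [← h1]; exact Finset.inter_subset_right
      have hAB : A = B := Subtype.ext (Finset.eq_of_subset_of_card_le h2 (by omega))
      subst hAB
      exact ⟨SimpleGraph.Walk.nil, by simp⟩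
    · by_cases hik : k ≤ (A.1 ∩ B.1).card
      · -- distance ≤ 2 via C ⊆ A ∩ B of size k
        obtain ⟨C, hCsub, hCcard⟩ := Finset.exists_subset_card_eq hik
        set CV : LevelVert n k := ⟨C, Or.inl hCcard⟩ with hCV
        have a1 : (levelGraph n k).Adj A CV :=
          (SimpleGraph.Adj.symm (levelAdj n k hk CV A hCcard hA
            (hCsub.trans Finset.inter_subset_left)))
        have a2 : (levelGraph n k).Adj CV B :=
          levelAdj n k hk CV B hCcard hB (hCsub.trans Finset.inter_subset_right)
        refine ⟨SimpleGraph.Walk.cons a1 (SimpleGraph.Walk.cons a2 SimpleGraph.Walk.nil), ?_⟩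
        simp only [SimpleGraph.Walk.length_cons, SimpleGraph.Walk.length_nil]
        have : 1 ≤ (m + d - 1) / d := by
          rw [Nat.le_div_iff_mul_le hdpos]; omega
        omega
      · push_neg at hik
        set i := (A.1 ∩ B.1).card with hi
        -- choose C with A∩B ⊆ C ⊆ A, |C| = k
        obtain ⟨C, hsubC, hCsubA, hCcard⟩ :=
          Finset.exists_subsuperset_card_eq (Finset.inter_subset_left : A.1 ∩ B.1 ⊆ A.1)
            (le_of_lt hik) (by omega)
        have hCB : C ∩ B.1 = A.1 ∩ B.1 := by
          apply Finset.Subset.antisymm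
          · exact Finset.inter_subset_inter_right hCsubA
          · intro x hx
            exact Finset.mem_inter.mpr ⟨hsubC (by exact hx), (Finset.mem_inter.mp hx).2⟩
        have hBC : (B.1 \ C).card = n - k - i := by
          have := Finset.card_sdiff_add_card_inter B.1 C
          rw [Finset.inter_comm, hCB] at this
          omega
        -- choose D ⊆ B \ C with |D| = d
        obtain ⟨D, hDsub, hDcard⟩ := Finset.exists_subset_card_eq (s := B.1 \ C) (n := d) (by omega)
        have hdisj : Disjoint C D :=
          Finset.disjoint_left.mpr fun x hxC hxD =>
            (Finset.mem_sdiff.mp (hDsub hxD)).2 hxC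
        set A' : Finset (Fin n) := C ∪ D with hA'
        have hA'card : A'.card = n - k := by
          rw [hA', Finset.card_union_of_disjoint hdisj]; omega
        set AV : LevelVert n k := ⟨A', Or.inr hA'card⟩ with hAV
        have hA'B : A' ∩ B.1 = (A.1 ∩ B.1) ∪ D := by
          rw [hA', Finset.union_inter_distrib_right, hCB]
          congr 1
          exact Finset.inter_eq_left.mpr (fun x hx => (Finset.mem_sdiff.mp (hDsub hx)).1)
        have hdisj2 : Disjoint (A.1 ∩ B.1) D := by
          refine Finset.disjoint_left.mpr ?_
          intro x hx hxD
          exact (Finset.mem_sdiff.mp (hDsub hxD)).2 (hsubC hx)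
        have hA'Bcard : (A'.card) = n - k := hA'card
        have hnewi : (AV.1 ∩ B.1).card = i + d := by
          show (A' ∩ B.1).card = i + d
          rw [hA'B, Finset.card_union_of_disjoint hdisj2, hDcard]
        have hm' : n - k - (AV.1 ∩ B.1).card = m - d := by rw [hnewi]; omega
        have hmd : d + 1 ≤ m := by omega
        obtain ⟨p', hp'⟩ := ih (m - d) (by omega) AV B hA'card hB hm'
        set CV : LevelVert n k := ⟨C, Or.inl hCcard⟩ with hCV
        have a1 : (levelGraph n k).Adj A CV :=
          SimpleGraph.Adj.symm (levelAdj n k hk CV A hCcard hA hCsubA)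
        have a2 : (levelGraph n k).Adj CV AV :=
          levelAdj n k hk CV AV hCcard hA'card (by exact Finset.subset_union_left)
        refine ⟨SimpleGraph.Walk.cons a1 (SimpleGraph.Walk.cons a2 p'), ?_⟩
        simp only [SimpleGraph.Walk.length_cons]
        have e1 : m - d + d - 1 = m - 1 := by omega
        have e2 : m + d - 1 = (m - 1) + d := by omega
        rw [e1] at hp'
        rw [e2, Nat.add_div_right _ hdpos]
        omega

theorem dist_le_of_card_eq_upper (n k i : ℕ) (hk : k < n - k)
    (A B : LevelVert n k) (hA : A.1.card = n - k) (hB : B.1.card = n - k)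
    (hi : (A.1 ∩ B.1).card = i) :
    (levelGraph n k).dist A B ≤ 2 * ((n - k - i + (n - 2 * k) - 1) / (n - 2 * k)) := by
  obtain ⟨p, hp⟩ := levelKey n k hk (n - k - i) A B hA hB (by rw [hi])
  exact le_trans (SimpleGraph.dist_le p) hp
end

section
/- Let n, k be naturals with k < n - k and let L_{k,n} be the level graph. If A, B ∈ [X]^k with |A ∩ B| = i, then the graph distance satisfies ‖AB‖ ≤ 2⌈(k - i)/(n - 2k)⌉. -/
private lemma ceil_step {d c c' : ℕ} (hd : 0 < d) (hc : 1 ≤ c) (h : c' ≤ c - d) :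
    (c' + d - 1) / d + 1 ≤ (c + d - 1) / d := by
  rcases le_or_gt d c with hdc | hdc
  · have h2 : c' + d - 1 + d ≤ c + d - 1 := by omega
    calc (c' + d - 1) / d + 1 = (c' + d - 1 + d) / d := (Nat.add_div_right _ hd).symm
      _ ≤ (c + d - 1) / d := Nat.div_le_div_right h2
  · have hc' : c' = 0 := by omega
    subst hc'
    rw [Nat.div_eq_of_lt (by omega)]
    have h1 : 1 ≤ (c + d - 1) / d := (Nat.one_le_div_iff hd).mpr (by omega)
    omega

private lemma level_step (n k : ℕ) (hk : k < n - k) (A B : LevelVert n k)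
    (hA : A.1.card = k) (hB : B.1.card = k) :
    ∃ A' : LevelVert n k, A'.1.card = k ∧
      (B.1 \ A'.1).card ≤ (B.1 \ A.1).card - (n - 2 * k) ∧
      ∃ p : (levelGraph n k).Walk A A', p.length = 2 := by
  have hn : 2 * k + 1 ≤ n := by omega
  set d := n - 2 * k with hd
  set c := (B.1 \ A.1).card with hc
  obtain ⟨D, hDs, hDc⟩ := Finset.exists_subset_card_eq
    (show min d c ≤ (B.1 \ A.1).card from min_le_right _ _)
  have hdisjAD : Disjoint A.1 D :=
    (Finset.disjoint_sdiff (s := A.1) (t := B.1)).mono_right hDs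
  have hC0card : (A.1 ∪ D).card = k + min d c := by
    rw [Finset.card_union_of_disjoint hdisjAD, hA, hDc]
  obtain ⟨C, hC0C, _, hCcard⟩ := Finset.exists_subsuperset_card_eq
    (Finset.subset_univ (A.1 ∪ D)) (n := n - k)
    (by rw [hC0card]; omega)
    (by rw [Finset.card_univ, Fintype.card_fin]; omega)
  have hBCk : (B.1 ∩ C).card ≤ k := by
    have := Finset.card_le_card (Finset.inter_subset_left (s₁ := B.1) (s₂ := C)); omega
  obtain ⟨A', hBCA', hA'C, hA'card⟩ := Finset.exists_subsuperset_card_eq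
    (Finset.inter_subset_right (s₁ := B.1)) (n := k) hBCk (by omega)
  have hAC : A.1 ⊆ C := Finset.Subset.trans Finset.subset_union_left hC0C
  refine ⟨⟨A', Or.inl hA'card⟩, hA'card, ?_, ?_⟩
  · -- card bound
    show (B.1 \ A').card ≤ c - d
    have h1 : (B.1 \ A') ⊆ B.1 \ C := by
      have : B.1 \ A' ⊆ B.1 \ (B.1 ∩ C) :=
        Finset.sdiff_subset_sdiff (le_refl _) hBCA'
      rwa [Finset.sdiff_inter_self_left] at this
    have h2 : (B.1 \ A').card ≤ (B.1 \ C).card := Finset.card_le_card h1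
    have h3 : (B.1 ∩ C).card + (B.1 \ C).card = B.1.card :=
      Finset.card_inter_add_card_sdiff _ _
    have h4 : (B.1 ∩ A.1).card + (B.1 \ A.1).card = B.1.card :=
      Finset.card_inter_add_card_sdiff _ _
    have hsub : (B.1 ∩ A.1) ∪ D ⊆ B.1 ∩ C := by
      apply Finset.union_subset
      · exact Finset.inter_subset_inter (le_refl _) hAC
      · intro x hx
        exact Finset.mem_inter.mpr ⟨(Finset.mem_sdiff.mp (hDs hx)).1,
          hC0C (Finset.mem_union_right _ hx)⟩
    have hdisj2 : Disjoint (B.1 ∩ A.1) D := by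
      refine Finset.disjoint_left.mpr ?_
      intro x hx hxD
      exact (Finset.mem_sdiff.mp (hDs hxD)).2 (Finset.mem_inter.mp hx).2
    have h5 : (B.1 ∩ A.1).card + min d c ≤ (B.1 ∩ C).card := by
      have := Finset.card_le_card hsub
      rwa [Finset.card_union_of_disjoint hdisj2, hDc] at this
    omega
  · -- walk of length 2
    have hne1 : A ≠ (⟨C, Or.inr hCcard⟩ : LevelVert n k) := by
      intro h
      have : A.1 = C := congrArg Subtype.val h
      have := congrArg Finset.card this
      omega
    have hne2 : (⟨C, Or.inr hCcard⟩ : LevelVert n k) ≠ ⟨A', Or.inl hA'card⟩ := by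
      intro h
      have : C = A' := congrArg Subtype.val h
      have := congrArg Finset.card this
      omega
    have hadj1 : (levelGraph n k).Adj A ⟨C, Or.inr hCcard⟩ :=
      ⟨hne1, Or.inl ⟨hA, hCcard, hAC⟩⟩
    have hadj2 : (levelGraph n k).Adj ⟨C, Or.inr hCcard⟩ ⟨A', Or.inl hA'card⟩ :=
      ⟨hne2, Or.inr ⟨hA'card, hCcard, hA'C⟩⟩
    exact ⟨SimpleGraph.Walk.cons hadj1 (SimpleGraph.Walk.cons hadj2 SimpleGraph.Walk.nil),
      rfl⟩

private lemma level_walk_aux (n k : ℕ) (hk : k < n - k) :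
    ∀ m : ℕ, ∀ A B : LevelVert n k, A.1.card = k → B.1.card = k →
      (B.1 \ A.1).card ≤ m →
      ∃ p : (levelGraph n k).Walk A B,
        p.length ≤ 2 * (((B.1 \ A.1).card + (n - 2 * k) - 1) / (n - 2 * k)) := by
  intro m
  induction m with
  | zero =>
    intro A B hA hB hle
    have h0 : (B.1 \ A.1).card = 0 := by omega
    have hBA : B.1 ⊆ A.1 := by
      rw [Finset.card_eq_zero, Finset.sdiff_eq_empty_iff_subset] at h0; exact h0
    have : B = A := Subtype.ext (Finset.eq_of_subset_of_card_le hBA (by omega))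
    subst this
    exact ⟨SimpleGraph.Walk.nil, by simp⟩
  | succ m ih =>
    intro A B hA hB hle
    by_cases hc : (B.1 \ A.1).card ≤ m
    · exact ih A B hA hB hc
    have hc1 : 1 ≤ (B.1 \ A.1).card := by omega
    have hdpos : 0 < n - 2 * k := by omega
    obtain ⟨A', hA', hcard', p1, hp1⟩ := level_step n k hk A B hA hB
    have hle' : (B.1 \ A'.1).card ≤ m := by omega
    obtain ⟨p2, hp2⟩ := ih A' B hA' hB hle'
    refine ⟨p1.append p2, ?_⟩
    rw [SimpleGraph.Walk.length_append, hp1]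
    have hstep := ceil_step hdpos hc1 hcard'
    generalize hq1 : ((B.1 \ A'.1).card + (n - 2 * k) - 1) / (n - 2 * k) = q1 at hp2 hstep
    generalize hq2 : ((B.1 \ A.1).card + (n - 2 * k) - 1) / (n - 2 * k) = q2 at hstep ⊢
    omega

theorem dist_le_of_card_eq_lower (n k i : ℕ) (hk : k < n - k)
    (A B : LevelVert n k) (hA : A.1.card = k) (hB : B.1.card = k)
    (hi : (A.1 ∩ B.1).card = i) :
    (levelGraph n k).dist A B ≤ 2 * ((k - i + (n - 2 * k) - 1) / (n - 2 * k)) := by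
  have h4 : (B.1 ∩ A.1).card + (B.1 \ A.1).card = B.1.card :=
    Finset.card_inter_add_card_sdiff _ _
  have hi' : (B.1 ∩ A.1).card = i := by rw [Finset.inter_comm]; exact hi
  have hki : k - i = (B.1 \ A.1).card := by omega
  rw [hki]
  obtain ⟨p, hp⟩ := level_walk_aux n k hk (B.1 \ A.1).card A B hA hB (le_refl _)
  exact le_trans (SimpleGraph.dist_le p) hp
end

section
/- The graph L_{k,n} (with k < n - k) is connected. -/
theorem levelGraph_connected (n k : ℕ) (ht : 0 < n - 2 * k) (hk : 0 < k) :
    (levelGraph n k).Connected := by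
  have hlt : 2 * k < n := Nat.lt_of_sub_pos ht
  have hne : k ≠ n - k := by omega
  -- step: two k-sets with small union are reachable (via a common (n-k)-superset)
  have step : ∀ (A : Finset (Fin n)) (hA : A.card = k) (A' : Finset (Fin n))
      (hA' : A'.card = k), (A ∪ A').card ≤ n - k →
      (levelGraph n k).Reachable ⟨A, Or.inl hA⟩ ⟨A', Or.inl hA'⟩ := by
    intro A hA A' hA' hcard
    obtain ⟨B, hsub, hB⟩ := Finset.exists_superset_card_eq hcard
      (by simpa using Nat.sub_le n k)
    have hAB : (levelGraph n k).Adj ⟨A, Or.inl hA⟩ ⟨B, Or.inr hB⟩ := by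
      refine ⟨?_, Or.inl ⟨hA, hB, (Finset.subset_union_left).trans hsub⟩⟩
      intro h
      have hval : A = B := congrArg Subtype.val h
      rw [hval, hB] at hA
      omega
    have hA'B : (levelGraph n k).Adj ⟨A', Or.inl hA'⟩ ⟨B, Or.inr hB⟩ := by
      refine ⟨?_, Or.inl ⟨hA', hB, (Finset.subset_union_right).trans hsub⟩⟩
      intro h
      have hval : A' = B := congrArg Subtype.val h
      rw [hval, hB] at hA'
      omega
    exact hAB.reachable.trans hA'B.reachable.symm
  -- key: any two k-sets are reachable
  have key : ∀ d (A A' : Finset (Fin n)) (hA : A.card = k) (hA' : A'.card = k),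
      (A' \ A).card = d →
      (levelGraph n k).Reachable ⟨A, Or.inl hA⟩ ⟨A', Or.inl hA'⟩ := by
    intro d
    induction d using Nat.strong_induction_on with
    | _ d ih =>
      intro A A' hA hA' hd
      rcases Nat.eq_zero_or_pos d with h0 | hpos
      · have hsub : A' ⊆ A := by
          rw [← Finset.sdiff_eq_empty_iff_subset]
          exact Finset.card_eq_zero.mp (hd.trans h0)
        have : A' = A := Finset.eq_of_subset_of_card_le hsub (by omega)
        subst this
        exact SimpleGraph.Reachable.refl _
      · obtain ⟨a, ha⟩ := Finset.card_pos.mp (by omega : 0 < (A' \ A).card)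
        have haA' : a ∈ A' := (Finset.mem_sdiff.mp ha).1
        have haA : a ∉ A := (Finset.mem_sdiff.mp ha).2
        have hcomm : (A \ A').card = (A' \ A).card :=
          Finset.card_sdiff_comm (hA.trans hA'.symm)
        obtain ⟨b, hb⟩ := Finset.card_pos.mp (by omega : 0 < (A \ A').card)
        have hbA : b ∈ A := (Finset.mem_sdiff.mp hb).1
        have hbA' : b ∉ A' := (Finset.mem_sdiff.mp hb).2
        set A'' : Finset (Fin n) := insert a (A.erase b) with hA''def
        have hanotin : a ∉ A.erase b := fun h => haA (Finset.mem_of_mem_erase h)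
        have hA'' : A''.card = k := by
          rw [hA''def, Finset.card_insert_of_notMem hanotin,
            Finset.card_erase_of_mem hbA, hA]
          omega
        have hstep : (levelGraph n k).Reachable ⟨A, Or.inl hA⟩ ⟨A'', Or.inl hA''⟩ := by
          refine step A hA A'' hA'' ?_
          have hsub : A ∪ A'' ⊆ insert a A := by
            intro x hx
            rcases Finset.mem_union.mp hx with h | h
            · exact Finset.mem_insert_of_mem h
            · rcases Finset.mem_insert.mp h with h | h
              · exact h ▸ Finset.mem_insert_self a A
              · exact Finset.mem_insert_of_mem (Finset.mem_of_mem_erase h)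
          calc (A ∪ A'').card ≤ (insert a A).card := Finset.card_le_card hsub
            _ ≤ A.card + 1 := Finset.card_insert_le a A
            _ ≤ n - k := by omega
        have hsdiff : A' \ A'' = (A' \ A).erase a := by
          ext x
          simp only [hA''def, Finset.mem_sdiff, Finset.mem_insert, Finset.mem_erase,
            not_or]
          constructor
          · rintro ⟨hx1, hx2, hx3⟩
            refine ⟨hx2, hx1, fun hxA => hx3 ⟨fun h => hbA' (h ▸ hx1), hxA⟩⟩
          · rintro ⟨hxa, hx1, hx2⟩
            exact ⟨hx1, hxa, fun h => hx2 h.2⟩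
        have hlt' : (A' \ A'').card < d := by
          rw [hsdiff, Finset.card_erase_of_mem ha, hd]; omega
        exact hstep.trans (ih _ hlt' A'' A' hA'' hA' rfl)
  -- reduce any vertex to a k-vertex
  have red : ∀ (u : LevelVert n k), ∃ (A : Finset (Fin n)) (hA : A.card = k),
      (levelGraph n k).Reachable u ⟨A, Or.inl hA⟩ := by
    intro u
    rcases u with ⟨B, hB | hB⟩
    · exact ⟨B, hB, SimpleGraph.Reachable.refl _⟩
    · obtain ⟨A, hsub, hA⟩ := Finset.exists_subset_card_eq (s := B) (n := k) (by omega)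
      refine ⟨A, hA, ?_⟩
      refine SimpleGraph.Adj.reachable ?_
      refine ⟨?_, Or.inr ⟨hA, hB, hsub⟩⟩
      intro h
      have hval : B = A := congrArg Subtype.val h
      rw [← hval, hB] at hA
      omega
  obtain ⟨A, -, hA⟩ := Finset.exists_subset_card_eq (s := (Finset.univ : Finset (Fin n))) (n := k)
    (by simp; omega)
  haveI : Nonempty (LevelVert n k) := ⟨⟨A, Or.inl hA⟩⟩
  refine ⟨?_⟩
  intro u v
  obtain ⟨A₁, hA₁, hu⟩ := red u
  obtain ⟨A₂, hA₂, hv⟩ := red v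
  exact (hu.trans (key _ A₁ A₂ hA₁ hA₂ rfl)).trans hv.symm
end

section
/- For all vertices A, B of L_{k,n} (with k < n - k), the graph distance satisfies: ‖AB‖ = 2⌈(k - |A∩B|)/(n-2k)⌉ + 1 if |A| ≠ |B|, and ‖AB‖ = 2⌈(|A| - |A∩B|)/(n-2k)⌉ if |A| = |B|. -/
/-- The distance function d on vertices of the level graph. -/
def dFun (n k : ℕ) (A B : LevelVert n k) : ℕ :=
  if A.1.card = B.1.card then
    2 * ((A.1.card - (A.1 ∩ B.1).card + (n - 2 * k) - 1) / (n - 2 * k))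
  else
    2 * ((k - (A.1 ∩ B.1).card + (n - 2 * k) - 1) / (n - 2 * k)) + 1

namespace LevelAux

lemma div_ceil_mono {m x y : ℕ} (h : x ≤ y) : (x + m - 1) / m ≤ (y + m - 1) / m :=
  Nat.div_le_div_right (by omega)

lemma div_ceil_step {m x y : ℕ} (hm : 0 < m) (h : x ≤ y + m) :
    (x + m - 1) / m ≤ (y + m - 1) / m + 1 := by
  have h1 : x + m - 1 ≤ (y + m - 1) + m := by omega
  calc (x + m - 1) / m ≤ ((y + m - 1) + m) / m := Nat.div_le_div_right h1
    _ = (y + m - 1) / m + 1 := Nat.add_div_right _ hm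

lemma div_ceil_sub {m x : ℕ} (hm : 0 < m) (hx : m < x) :
    ((x - m) + m - 1) / m + 1 = (x + m - 1) / m := by
  have h1 : (x - m) + m - 1 = x - 1 := by omega
  have h2 : x + m - 1 = (x - 1) + m := by omega
  rw [h1, h2, Nat.add_div_right _ hm]

lemma div_ceil_pos {m x : ℕ} (hm : 0 < m) (hx : 0 < x) : 1 ≤ (x + m - 1) / m :=
  (Nat.one_le_div_iff hm).2 (by omega)

variable {n k : ℕ}

lemma inter_card_le {A C B : Finset (Fin n)} (h : A ⊆ C) :
    (C ∩ B).card ≤ (A ∩ B).card + (C.card - A.card) := by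
  have h1 : C ∩ B ⊆ (A ∩ B) ∪ (C \ A) := by
    intro x hx
    simp only [Finset.mem_inter, Finset.mem_union, Finset.mem_sdiff] at *
    tauto
  calc (C ∩ B).card ≤ ((A ∩ B) ∪ (C \ A)).card := Finset.card_le_card h1
    _ ≤ (A ∩ B).card + (C \ A).card := Finset.card_union_le _ _
    _ = (A ∩ B).card + (C.card - A.card) := by rw [Finset.card_sdiff_of_subset h]

lemma vert_ne_of_card {A B : LevelVert n k} (h : A.1.card ≠ B.1.card) : A ≠ B :=
  fun e => h (by rw [e])

lemma dFun_lipschitz (hk : 0 < n - 2 * k) {A C : LevelVert n k} (B : LevelVert n k)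
    (h : (levelGraph n k).Adj A C) : dFun n k A B ≤ dFun n k C B + 1 := by
  have hkn : k ≠ n - k := by omega
  have htA : (A.1 ∩ B.1).card ≤ A.1.card := Finset.card_le_card Finset.inter_subset_left
  have htC : (C.1 ∩ B.1).card ≤ C.1.card := Finset.card_le_card Finset.inter_subset_left
  have htB : (A.1 ∩ B.1).card ≤ B.1.card := Finset.card_le_card Finset.inter_subset_right
  have htB' : (C.1 ∩ B.1).card ≤ B.1.card := Finset.card_le_card Finset.inter_subset_right
  rcases h.2 with ⟨hAk, hCnk, hAC⟩ | ⟨hCk, hAnk, hCA⟩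
  · -- A ⊆ C, |A| = k, |C| = n - k
    have hmono : (A.1 ∩ B.1).card ≤ (C.1 ∩ B.1).card :=
      Finset.card_le_card (Finset.inter_subset_inter hAC (le_refl _))
    have hstep : (C.1 ∩ B.1).card ≤ (A.1 ∩ B.1).card + (n - 2 * k) := by
      have := inter_card_le (B := B.1) hAC
      rw [hAk, hCnk] at this; omega
    rcases B.2 with hBk | hBnk
    · -- B at level k
      rw [dFun, dFun, if_pos (by rw [hAk, hBk]), if_neg (by rw [hCnk, hBk]; omega), hAk]
      have := div_ceil_step (m := n - 2 * k) (x := k - (A.1 ∩ B.1).card)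
        (y := k - (C.1 ∩ B.1).card) hk (by omega)
      omega
    · -- B at level n - k
      rw [dFun, dFun, if_neg (by rw [hAk, hBnk]; omega), if_pos (by rw [hCnk, hBnk]), hCnk]
      have := div_ceil_mono (m := n - 2 * k) (x := k - (A.1 ∩ B.1).card)
        (y := (n - k) - (C.1 ∩ B.1).card) (by omega)
      omega
  · -- C ⊆ A, |C| = k, |A| = n - k
    have hmono : (C.1 ∩ B.1).card ≤ (A.1 ∩ B.1).card :=
      Finset.card_le_card (Finset.inter_subset_inter hCA (le_refl _))
    rcases B.2 with hBk | hBnk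
    · rw [dFun, dFun, if_neg (by rw [hAnk, hBk]; omega), if_pos (by rw [hCk, hBk]), hCk]
      have := div_ceil_mono (m := n - 2 * k) (x := k - (A.1 ∩ B.1).card)
        (y := k - (C.1 ∩ B.1).card) (by omega)
      omega
    · rw [dFun, dFun, if_pos (by rw [hAnk, hBnk]), if_neg (by rw [hCk, hBnk]; omega), hAnk]
      have := div_ceil_step (m := n - 2 * k) (x := (n - k) - (A.1 ∩ B.1).card)
        (y := k - (C.1 ∩ B.1).card) hk (by rw [hAnk] at htA; omega)
      omega

lemma dFun_le_walk (hk : 0 < n - 2 * k) {A B : LevelVert n k}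
    (w : (levelGraph n k).Walk A B) : dFun n k A B ≤ w.length := by
  induction w with
  | nil =>
    rename_i A
    rw [dFun, if_pos rfl, Finset.inter_self, Nat.div_eq_of_lt (by omega)]
    simp
  | cons h p ih =>
    rw [SimpleGraph.Walk.length_cons]
    exact le_trans (dFun_lipschitz hk _ h) (Nat.add_le_add_right ih 1)

lemma walk_same_k (hk : 0 < n - 2 * k) :
    ∀ d, ∀ A B : LevelVert n k, A.1.card = k → B.1.card = k →
      k - (A.1 ∩ B.1).card ≤ d →
      ∃ w : (levelGraph n k).Walk A B,
        w.length ≤ 2 * ((k - (A.1 ∩ B.1).card + (n - 2 * k) - 1) / (n - 2 * k)) := by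
  set m := n - 2 * k with hm
  have hcardfin : Fintype.card (Fin n) = n := Fintype.card_fin n
  intro d
  induction d with
  | zero =>
    intro A B hA hB hd
    have ht : (A.1 ∩ B.1).card = k := by
      have := Finset.card_le_card ((Finset.inter_subset_left : A.1 ∩ B.1 ⊆ A.1))
      omega
    have hAB : A.1 = B.1 := by
      have h1 : A.1 ∩ B.1 = A.1 :=
        Finset.eq_of_subset_of_card_le Finset.inter_subset_left (by omega)
      have h2 : A.1 ⊆ B.1 := by rw [← h1]; exact Finset.inter_subset_right
      exact Finset.eq_of_subset_of_card_le h2 (by omega)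
    have hABv : A = B := Subtype.ext hAB
    subst hABv
    exact ⟨SimpleGraph.Walk.nil, by simp⟩
  | succ d ih =>
    intro A B hA hB hd
    set t := (A.1 ∩ B.1).card with htdef
    have ht : t ≤ k := by
      have := Finset.card_le_card ((Finset.inter_subset_left : A.1 ∩ B.1 ⊆ A.1))
      omega
    by_cases h0 : k - t ≤ d
    · exact ih A B hA hB h0
    have hkt : k - t = d + 1 := by omega
    by_cases hsmall : k - t ≤ m
    · -- two-step walk through a superset of A ∪ B
      have hAB : (A.1 ∪ B.1).card ≤ n - k := by
        have := Finset.card_union_le A.1 B.1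
        have := Finset.card_inter_add_card_union A.1 B.1
        omega
      obtain ⟨C, hC1, hC2⟩ := Finset.exists_superset_card_eq hAB (by omega)
      set Cv : LevelVert n k := ⟨C, Or.inr hC2⟩ with hCv
      have adj1 : (levelGraph n k).Adj A Cv := by
        refine ⟨vert_ne_of_card (by rw [hA, hC2]; omega), Or.inl ⟨hA, hC2, ?_⟩⟩
        exact (Finset.subset_union_left).trans hC1
      have adj2 : (levelGraph n k).Adj Cv B := by
        refine ⟨vert_ne_of_card (by rw [hB, hC2]; omega), Or.inr ⟨hB, hC2, ?_⟩⟩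
        exact (Finset.subset_union_right).trans hC1
      refine ⟨SimpleGraph.Walk.cons adj1 (SimpleGraph.Walk.cons adj2 SimpleGraph.Walk.nil), ?_⟩
      have := div_ceil_pos (m := m) (x := k - t) hk (by omega)
      simp only [SimpleGraph.Walk.length_cons, SimpleGraph.Walk.length_nil]
      omega
    · -- long step: improve intersection by m
      push_neg at hsmall
      have hBA : (B.1 \ A.1).card = k - t := by
        have := Finset.card_inter_add_card_sdiff B.1 A.1
        rw [Finset.inter_comm] at this
        omega
      obtain ⟨S, hS1, hS2⟩ := Finset.exists_subset_card_eq (s := B.1 \ A.1) (n := m) (by omega)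
      have hdisj : Disjoint A.1 S := by
        refine Finset.disjoint_left.2 fun x hx hxS => ?_
        have := hS1 hxS
        rw [Finset.mem_sdiff] at this
        exact this.2 hx
      set C : Finset (Fin n) := A.1 ∪ S with hCdef
      have hCcard : C.card = n - k := by
        rw [hCdef, Finset.card_union_of_disjoint hdisj, hA, hS2]; omega
      -- intermediate k-set A' with (A ∩ B) ∪ S ⊆ A' ⊆ C
      have hsub : (A.1 ∩ B.1) ∪ S ⊆ C := by
        apply Finset.union_subset
        · exact Finset.inter_subset_left.trans Finset.subset_union_left
        · exact Finset.subset_union_right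
      have hdisj2 : Disjoint (A.1 ∩ B.1) S := by
        refine Finset.disjoint_left.2 fun x hx hxS => ?_
        have := hS1 hxS
        rw [Finset.mem_sdiff] at this
        exact this.2 (Finset.mem_inter.1 hx).1
      have hcard2 : ((A.1 ∩ B.1) ∪ S).card = t + m := by
        rw [Finset.card_union_of_disjoint hdisj2, hS2]
      obtain ⟨A', hA'1, hA'2, hA'3⟩ :=
        Finset.exists_subsuperset_card_eq hsub (n := k) (by omega) (by omega)
      set A'v : LevelVert n k := ⟨A', Or.inl hA'3⟩ with hA'v
      set Cv : LevelVert n k := ⟨C, Or.inr hCcard⟩ with hCv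
      have adj1 : (levelGraph n k).Adj A Cv := by
        refine ⟨vert_ne_of_card (by rw [hA, hCcard]; omega),
          Or.inl ⟨hA, hCcard, Finset.subset_union_left⟩⟩
      have adj2 : (levelGraph n k).Adj Cv A'v := by
        exact ⟨vert_ne_of_card (by rw [hA'3, hCcard]; omega), Or.inr ⟨hA'3, hCcard, hA'2⟩⟩
      have htnew : t + m ≤ (A' ∩ B.1).card := by
        have hsub2 : (A.1 ∩ B.1) ∪ S ⊆ A' ∩ B.1 := by
          apply Finset.subset_inter hA'1
          apply Finset.union_subset Finset.inter_subset_right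
          exact hS1.trans (Finset.sdiff_subset)
        calc t + m = ((A.1 ∩ B.1) ∪ S).card := hcard2.symm
          _ ≤ (A' ∩ B.1).card := Finset.card_le_card hsub2
      have ht' : (A'v.1 ∩ B.1).card = (A' ∩ B.1).card := rfl
      obtain ⟨w', hw'⟩ := ih A'v B hA'3 hB (by rw [ht']; omega)
      refine ⟨SimpleGraph.Walk.cons adj1 (SimpleGraph.Walk.cons adj2 w'), ?_⟩
      simp only [SimpleGraph.Walk.length_cons]
      rw [ht'] at hw'
      have hmono2 : (k - (A' ∩ B.1).card + m - 1) / m ≤ ((k - t - m) + m - 1) / m :=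
        div_ceil_mono (by omega)
      have hsubd : ((k - t) - m + m - 1) / m + 1 = (k - t + m - 1) / m :=
        div_ceil_sub hk (by omega)
      omega

lemma walk_same_nk (hk : 0 < n - 2 * k) :
    ∀ d, ∀ A B : LevelVert n k, A.1.card = n - k → B.1.card = n - k →
      (n - k) - (A.1 ∩ B.1).card ≤ d →
      ∃ w : (levelGraph n k).Walk A B,
        w.length ≤ 2 * ((n - k - (A.1 ∩ B.1).card + (n - 2 * k) - 1) / (n - 2 * k)) := by
  set m := n - 2 * k with hm
  intro d
  induction d with
  | zero =>
    intro A B hA hB hd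
    have ht : (A.1 ∩ B.1).card = n - k := by
      have := Finset.card_le_card ((Finset.inter_subset_left : A.1 ∩ B.1 ⊆ A.1))
      omega
    have hAB : A.1 = B.1 := by
      have h1 : A.1 ∩ B.1 = A.1 :=
        Finset.eq_of_subset_of_card_le Finset.inter_subset_left (by omega)
      have h2 : A.1 ⊆ B.1 := by rw [← h1]; exact Finset.inter_subset_right
      exact Finset.eq_of_subset_of_card_le h2 (by omega)
    have hABv : A = B := Subtype.ext hAB
    subst hABv
    exact ⟨SimpleGraph.Walk.nil, by simp⟩
  | succ d ih =>
    intro A B hA hB hd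
    set t := (A.1 ∩ B.1).card with htdef
    have ht : t ≤ n - k := by
      have := Finset.card_le_card ((Finset.inter_subset_left : A.1 ∩ B.1 ⊆ A.1))
      omega
    by_cases h0 : (n - k) - t ≤ d
    · exact ih A B hA hB h0
    have hkt : (n - k) - t = d + 1 := by omega
    by_cases hsmall : (n - k) - t ≤ m
    · -- two-step walk through a k-subset of A ∩ B
      have htk : k ≤ t := by omega
      obtain ⟨C, hC1, hC2⟩ :=
        Finset.exists_subset_card_eq (s := A.1 ∩ B.1) (n := k) (by omega)
      set Cv : LevelVert n k := ⟨C, Or.inl hC2⟩ with hCv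
      have adj1 : (levelGraph n k).Adj A Cv := by
        refine ⟨vert_ne_of_card (by rw [hA, hC2]; omega),
          Or.inr ⟨hC2, hA, hC1.trans Finset.inter_subset_left⟩⟩
      have adj2 : (levelGraph n k).Adj Cv B := by
        refine ⟨vert_ne_of_card (by rw [hB, hC2]; omega),
          Or.inl ⟨hC2, hB, hC1.trans Finset.inter_subset_right⟩⟩
      refine ⟨SimpleGraph.Walk.cons adj1 (SimpleGraph.Walk.cons adj2 SimpleGraph.Walk.nil), ?_⟩
      have := div_ceil_pos (m := m) (x := (n - k) - t) hk (by omega)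
      simp only [SimpleGraph.Walk.length_cons, SimpleGraph.Walk.length_nil]
      omega
    · -- long step
      push_neg at hsmall
      have hABd : (A.1 \ B.1).card = (n - k) - t := by
        have := Finset.card_inter_add_card_sdiff A.1 B.1
        omega
      obtain ⟨T, hT1, hT2⟩ := Finset.exists_subset_card_eq (s := A.1 \ B.1) (n := m) (by omega)
      set C : Finset (Fin n) := A.1 \ T with hCdef
      have hTA : T ⊆ A.1 := hT1.trans Finset.sdiff_subset
      have hCcard : C.card = k := by
        rw [hCdef, Finset.card_sdiff_of_subset hTA, hA, hT2]; omega
      have hCA : C ⊆ A.1 := Finset.sdiff_subset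
      have hCB : A.1 ∩ B.1 ⊆ C := by
        intro x hx
        rw [Finset.mem_inter] at hx
        rw [hCdef, Finset.mem_sdiff]
        refine ⟨hx.1, fun hxT => ?_⟩
        have := hT1 hxT
        rw [Finset.mem_sdiff] at this
        exact this.2 hx.2
      have hCBcard : (C ∩ B.1).card = t := by
        apply le_antisymm
        · exact Finset.card_le_card (Finset.inter_subset_inter hCA (le_refl _))
        · exact Finset.card_le_card (Finset.subset_inter hCB Finset.inter_subset_right)
      have hBC : m ≤ (B.1 \ C).card := by
        have h1 := Finset.card_inter_add_card_sdiff B.1 C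
        rw [Finset.inter_comm] at h1
        omega
      obtain ⟨S, hS1, hS2⟩ := Finset.exists_subset_card_eq (s := B.1 \ C) (n := m) hBC
      have hdisj : Disjoint C S := by
        refine Finset.disjoint_left.2 fun x hx hxS => ?_
        have := hS1 hxS
        rw [Finset.mem_sdiff] at this
        exact this.2 hx
      set A' : Finset (Fin n) := C ∪ S with hA'def
      have hA'card : A'.card = n - k := by
        rw [hA'def, Finset.card_union_of_disjoint hdisj, hCcard, hS2]; omega
      set A'v : LevelVert n k := ⟨A', Or.inr hA'card⟩ with hA'v
      set Cv : LevelVert n k := ⟨C, Or.inl hCcard⟩ with hCv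
      have adj1 : (levelGraph n k).Adj A Cv :=
        ⟨vert_ne_of_card (by rw [hA, hCcard]; omega), Or.inr ⟨hCcard, hA, hCA⟩⟩
      have adj2 : (levelGraph n k).Adj Cv A'v :=
        ⟨vert_ne_of_card (by rw [hA'card, hCcard]; omega),
          Or.inl ⟨hCcard, hA'card, Finset.subset_union_left⟩⟩
      have htnew : t + m ≤ (A' ∩ B.1).card := by
        have hsub2 : (C ∩ B.1) ∪ S ⊆ A' ∩ B.1 := by
          apply Finset.union_subset
          · exact Finset.subset_inter
              (Finset.inter_subset_left.trans Finset.subset_union_left)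
              Finset.inter_subset_right
          · exact Finset.subset_inter Finset.subset_union_right
              (hS1.trans Finset.sdiff_subset)
        have hdisj2 : Disjoint (C ∩ B.1) S :=
          Finset.disjoint_of_subset_left Finset.inter_subset_left hdisj
        calc t + m = ((C ∩ B.1) ∪ S).card := by
              rw [Finset.card_union_of_disjoint hdisj2, hCBcard, hS2]
          _ ≤ (A' ∩ B.1).card := Finset.card_le_card hsub2
      have ht'le : (A' ∩ B.1).card ≤ n - k := by
        have := Finset.card_le_card
          ((Finset.inter_subset_left : A' ∩ B.1 ⊆ A'))
        omega
      have ht' : (A'v.1 ∩ B.1).card = (A' ∩ B.1).card := rfl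
      obtain ⟨w', hw'⟩ := ih A'v B hA'card hB (by rw [ht']; omega)
      refine ⟨SimpleGraph.Walk.cons adj1 (SimpleGraph.Walk.cons adj2 w'), ?_⟩
      simp only [SimpleGraph.Walk.length_cons]
      rw [ht'] at hw'
      have hmono2 : (n - k - (A' ∩ B.1).card + m - 1) / m
          ≤ (((n - k) - t - m) + m - 1) / m := div_ceil_mono (by omega)
      have hsubd : (((n - k) - t) - m + m - 1) / m + 1 = ((n - k) - t + m - 1) / m :=
        div_ceil_sub hk (by omega)
      have hfin : n - k - t = (n - k) - t := rfl
      omega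

lemma walk_mixed (hk : 0 < n - 2 * k) (A B : LevelVert n k)
    (hA : A.1.card = k) (hB : B.1.card = n - k) :
    ∃ w : (levelGraph n k).Walk A B,
      w.length ≤ 2 * ((k - (A.1 ∩ B.1).card + (n - 2 * k) - 1) / (n - 2 * k)) + 1 := by
  set t := (A.1 ∩ B.1).card with htdef
  have ht : t ≤ k := by
    have := Finset.card_le_card ((Finset.inter_subset_left : A.1 ∩ B.1 ⊆ A.1))
    omega
  obtain ⟨B', hB'1, hB'2, hB'3⟩ := Finset.exists_subsuperset_card_eq
    ((Finset.inter_subset_right : A.1 ∩ B.1 ⊆ B.1)) (n := k) (by omega) (by omega)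
  set B'v : LevelVert n k := ⟨B', Or.inl hB'3⟩ with hB'v
  have hint : (A.1 ∩ B'v.1).card = t := by
    apply le_antisymm
    · exact Finset.card_le_card (Finset.inter_subset_inter (le_refl _) hB'2)
    · exact Finset.card_le_card (Finset.subset_inter Finset.inter_subset_left hB'1)
  obtain ⟨w, hw⟩ := walk_same_k hk k A B'v hA hB'3 (by omega)
  have adj : (levelGraph n k).Adj B'v B :=
    ⟨vert_ne_of_card (by rw [hB, hB'3]; omega), Or.inl ⟨hB'3, hB, hB'2⟩⟩
  refine ⟨w.concat adj, ?_⟩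
  rw [SimpleGraph.Walk.length_concat]
  rw [hint] at hw
  omega

lemma exists_short_walk (hk : 0 < n - 2 * k) (A B : LevelVert n k) :
    ∃ w : (levelGraph n k).Walk A B, w.length ≤ dFun n k A B := by
  set m := n - 2 * k with hm
  rcases A.2 with hA | hA <;> rcases B.2 with hB | hB
  · obtain ⟨w, hw⟩ := walk_same_k hk k A B hA hB (by omega)
    exact ⟨w, by rw [dFun, if_pos (by rw [hA, hB]), hA]; exact hw⟩
  · obtain ⟨w, hw⟩ := walk_mixed hk A B hA hB
    exact ⟨w, by rw [dFun, if_neg (by rw [hA, hB]; omega)]; exact hw⟩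
  · obtain ⟨w, hw⟩ := walk_mixed hk B A hB hA
    refine ⟨w.reverse, ?_⟩
    rw [SimpleGraph.Walk.length_reverse]
    rw [dFun, if_neg (by rw [hA, hB]; omega), Finset.inter_comm]
    exact hw
  · obtain ⟨w, hw⟩ := walk_same_nk hk (n - k) A B hA hB (by omega)
    exact ⟨w, by rw [dFun, if_pos (by rw [hA, hB]), hA]; exact hw⟩

end LevelAux

theorem levelGraph_dist_eq (n k : ℕ) (hk : 0 < n - 2 * k) :
    ∀ A B : LevelVert n k, (levelGraph n k).dist A B = dFun n k A B := by
  intro A B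
  obtain ⟨w, hw⟩ := LevelAux.exists_short_walk hk A B
  have h1 : (levelGraph n k).dist A B ≤ dFun n k A B :=
    le_trans (SimpleGraph.dist_le w) hw
  have hr : (levelGraph n k).Reachable A B := ⟨w⟩
  obtain ⟨p, hp⟩ := hr.exists_walk_length_eq_dist
  have h2 : dFun n k A B ≤ (levelGraph n k).dist A B :=
    hp ▸ LevelAux.dFun_le_walk hk p
  omega
end

section
/- The diameter of the graph L_{k,n} (with 0 < k < n - k) equals 2⌈k/(n-2k)⌉ + 1. -/
section Aux

variable {n k : ℕ}

lemma lg_adj (hkn : k < n - k) {A B : Finset (Fin n)} (hA : A.card = k)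
    (hB : B.card = n - k) (hAB : A ⊆ B) (pA pB) :
    (levelGraph n k).Adj ⟨A, pA⟩ ⟨B, pB⟩ := by
  refine ⟨?_, Or.inl ⟨hA, hB, hAB⟩⟩
  intro h
  have : A = B := congrArg Subtype.val h
  rw [this, hB] at hA
  omega

/-- Lower-bound invariant along walks. -/
lemma walk_lb (hkn : k < n - k) {u v : LevelVert n k}
    (p : (levelGraph n k).Walk u v) :
    (u.1.card = k → k ≤ (u.1 ∩ v.1).card + (p.length / 2) * (n - 2 * k)) ∧
    (u.1.card = n - k →
      k + (n - 2 * k) ≤ (u.1 ∩ v.1).card + ((p.length + 1) / 2) * (n - 2 * k)) := by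
  induction p with
  | nil =>
    constructor
    · intro h; simp [Finset.inter_self, h]
    · intro h; simp [Finset.inter_self, h]; omega
  | @cons u u' v h q ih =>
    obtain ⟨hne, hcase⟩ := h
    constructor
    · intro hu
      rcases hcase with ⟨h1, h2, h3⟩ | ⟨h1, h2, h3⟩
      · have hsub : u'.1 ∩ v.1 ⊆ (u.1 ∩ v.1) ∪ (u'.1 \ u.1) := by
          intro x hx
          simp only [Finset.mem_inter, Finset.mem_union, Finset.mem_sdiff] at hx ⊢
          by_cases hxu : x ∈ u.1
          · exact Or.inl ⟨hxu, hx.2⟩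
          · exact Or.inr ⟨hx.1, hxu⟩
        have hc1 : (u'.1 ∩ v.1).card ≤ (u.1 ∩ v.1).card + (u'.1 \ u.1).card :=
          le_trans (Finset.card_le_card hsub) (Finset.card_union_le _ _)
        have hc2 : (u'.1 \ u.1).card = n - 2 * k := by
          rw [Finset.card_sdiff_of_subset h3, h2, hu]; omega
        have := ih.2 h2
        erw [SimpleGraph.Walk.length_cons]
        omega
      · rw [h2] at hu; omega
    · intro hu
      rcases hcase with ⟨h1, h2, h3⟩ | ⟨h1, h2, h3⟩
      · rw [h1] at hu; omega
      · have hc1 : (u'.1 ∩ v.1).card ≤ (u.1 ∩ v.1).card :=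
          Finset.card_le_card (Finset.inter_subset_inter_right h3)
        have := ih.1 h1
        erw [SimpleGraph.Walk.length_cons]
        have hdiv : (q.length + 1 + 1) / 2 = q.length / 2 + 1 := by omega
        rw [hdiv, add_mul, one_mul]
        omega

/-- Parity along walks. -/
lemma walk_parity (hkn : k < n - k) {u v : LevelVert n k}
    (p : (levelGraph n k).Walk u v) :
    (u.1.card = k → v.1.card = n - k → Odd p.length) ∧
    (u.1.card = n - k → v.1.card = n - k → Even p.length) := by
  induction p with
  | nil =>
    constructor
    · intro h1 h2; rw [h1] at h2; omega
    · intro _ _; simp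
  | @cons u u' v h q ih =>
    obtain ⟨hne, hcase⟩ := h
    erw [SimpleGraph.Walk.length_cons]
    constructor
    · intro hu hv
      rcases hcase with ⟨h1, h2, h3⟩ | ⟨h1, h2, h3⟩
      · obtain ⟨m, hm⟩ := ih.2 h2 hv; exact ⟨m, by omega⟩
      · rw [h2] at hu; omega
    · intro hu hv
      rcases hcase with ⟨h1, h2, h3⟩ | ⟨h1, h2, h3⟩
      · rw [h1] at hu; omega
      · obtain ⟨m, hm⟩ := ih.1 h1 hv; exact ⟨m + 1, by omega⟩

/-- One double-step improving intersection with a target set `T`. -/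
lemma step_lemma (hkn : k < n - k) {A T : Finset (Fin n)} (hA : A.card = k)
    (hT : k ≤ T.card) (hlt : (A ∩ T).card < k) :
    ∃ A₁ B₁ : Finset (Fin n), A₁.card = k ∧ B₁.card = n - k ∧ A ⊆ B₁ ∧ A₁ ⊆ B₁ ∧
      (A ∩ T).card + min (n - 2 * k) (k - (A ∩ T).card) ≤ (A₁ ∩ T).card := by
  set d := n - 2 * k with hd
  set c := (A ∩ T).card with hc
  set m := min d (k - c) with hm
  have hnk : n - k = k + d := by omega
  have hTA : m ≤ (T \ A).card := by
    have h1 : (T \ A).card + (T ∩ A).card = T.card := Finset.card_sdiff_add_card_inter T A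
    have h2 : (T ∩ A).card = c := by rw [Finset.inter_comm]
    omega
  obtain ⟨D, hDsub, hDcard⟩ := Finset.exists_subset_card_eq hTA
  have hdisj : Disjoint A D := by
    refine Finset.disjoint_left.mpr fun x hx hxD => ?_
    exact (Finset.mem_sdiff.mp (hDsub hxD)).2 hx
  have hAD : (A ∪ D).card = k + m := by
    rw [Finset.card_union_of_disjoint hdisj, hA, hDcard]
  obtain ⟨B₁, hB₁sub, _, hB₁card⟩ :=
    Finset.exists_subsuperset_card_eq (n := n - k) (Finset.subset_univ (A ∪ D))
      (by rw [hAD]; omega) (by simp)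
  have hsub2 : (A ∩ T) ∪ D ⊆ B₁ := by
    apply Finset.union_subset
    · exact (Finset.inter_subset_left).trans ((Finset.subset_union_left).trans hB₁sub)
    · exact (Finset.subset_union_right).trans hB₁sub
  have hdisj2 : Disjoint (A ∩ T) D := by
    refine Finset.disjoint_left.mpr fun x hx hxD => ?_
    exact (Finset.mem_sdiff.mp (hDsub hxD)).2 (Finset.mem_inter.mp hx).1
  have hcard2 : ((A ∩ T) ∪ D).card = c + m := by
    rw [Finset.card_union_of_disjoint hdisj2, hDcard]
  obtain ⟨A₁, hA₁sup, hA₁sub, hA₁card⟩ :=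
    Finset.exists_subsuperset_card_eq (n := k) hsub2 (by rw [hcard2]; omega)
      (by rw [hB₁card]; omega)
  refine ⟨A₁, B₁, hA₁card, hB₁card, (Finset.subset_union_left).trans hB₁sub, hA₁sub, ?_⟩
  have : (A ∩ T) ∪ D ⊆ A₁ ∩ T := by
    refine Finset.subset_inter hA₁sup ?_
    apply Finset.union_subset Finset.inter_subset_right
    exact fun x hx => (Finset.mem_sdiff.mp (hDsub hx)).1
  calc c + m = ((A ∩ T) ∪ D).card := hcard2.symm
    _ ≤ (A₁ ∩ T).card := Finset.card_le_card this

/-- Upper bound: from a `k`-set to an `(n-k)`-set. -/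
lemma walk_ub1 (hkn : k < n - k) (j : ℕ) :
    ∀ (A B : Finset (Fin n)) (hA : A.card = k) (hB : B.card = n - k),
      k ≤ (A ∩ B).card + j * (n - 2 * k) →
      ∃ p : (levelGraph n k).Walk ⟨A, Or.inl hA⟩ ⟨B, Or.inr hB⟩, p.length ≤ 2 * j + 1 := by
  induction j with
  | zero =>
    intro A B hA hB h
    simp only [Nat.zero_mul, Nat.add_zero] at h
    have heq : A ∩ B = A :=
      Finset.eq_of_subset_of_card_le Finset.inter_subset_left (by omega)
    have hsub : A ⊆ B := Finset.inter_eq_left.mp heq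
    exact ⟨SimpleGraph.Walk.cons (lg_adj hkn hA hB hsub _ _) SimpleGraph.Walk.nil, le_refl _⟩
  | succ j ih =>
    intro A B hA hB h
    by_cases hge : k ≤ (A ∩ B).card
    · have heq : A ∩ B = A :=
        Finset.eq_of_subset_of_card_le Finset.inter_subset_left (by omega)
      have hsub : A ⊆ B := Finset.inter_eq_left.mp heq
      exact ⟨SimpleGraph.Walk.cons (lg_adj hkn hA hB hsub _ _) SimpleGraph.Walk.nil, Nat.le_add_left 1 _⟩
    · push_neg at hge
      obtain ⟨A₁, B₁, hA₁, hB₁, hAB₁, hA₁B₁, hineq⟩ :=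
        step_lemma hkn hA (by omega : k ≤ B.card) hge
      have h' : k ≤ (A₁ ∩ B).card + j * (n - 2 * k) := by
        have hjd : (j + 1) * (n - 2 * k) = j * (n - 2 * k) + (n - 2 * k) := by ring
        rcases le_total (n - 2 * k) (k - (A ∩ B).card) with hmin | hmin
        · rw [min_eq_left hmin] at hineq; omega
        · rw [min_eq_right hmin] at hineq; omega
      obtain ⟨p, hp⟩ := ih A₁ B hA₁ hB h'
      refine ⟨SimpleGraph.Walk.cons (lg_adj hkn hA hB₁ hAB₁ _ (Or.inr hB₁))
        (SimpleGraph.Walk.cons ((lg_adj hkn hA₁ hB₁ hA₁B₁ (Or.inl hA₁) _).symm) p), ?_⟩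
      erw [SimpleGraph.Walk.length_cons, SimpleGraph.Walk.length_cons]
      omega

/-- Upper bound: from a `k`-set to a `k`-set. -/
lemma walk_ub2 (hkn : k < n - k) (j : ℕ) :
    ∀ (A B : Finset (Fin n)) (hA : A.card = k) (hB : B.card = k),
      k ≤ (A ∩ B).card + j * (n - 2 * k) →
      ∃ p : (levelGraph n k).Walk ⟨A, Or.inl hA⟩ ⟨B, Or.inl hB⟩, p.length ≤ 2 * j := by
  induction j with
  | zero =>
    intro A B hA hB h
    simp only [Nat.zero_mul, Nat.add_zero] at h
    have heq : A ∩ B = A :=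
      Finset.eq_of_subset_of_card_le Finset.inter_subset_left (by omega)
    have heq2 : A ∩ B = B :=
      Finset.eq_of_subset_of_card_le Finset.inter_subset_right (by omega)
    obtain rfl : A = B := heq ▸ heq2
    exact ⟨SimpleGraph.Walk.nil, le_refl _⟩
  | succ j ih =>
    intro A B hA hB h
    by_cases hge : k ≤ (A ∩ B).card
    · have heq : A ∩ B = A :=
        Finset.eq_of_subset_of_card_le Finset.inter_subset_left (by omega)
      have heq2 : A ∩ B = B :=
        Finset.eq_of_subset_of_card_le Finset.inter_subset_right (by omega)
      obtain rfl : A = B := heq ▸ heq2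
      exact ⟨SimpleGraph.Walk.nil, Nat.zero_le _⟩
    · push_neg at hge
      obtain ⟨A₁, B₁, hA₁, hB₁, hAB₁, hA₁B₁, hineq⟩ :=
        step_lemma hkn hA (by omega : k ≤ B.card) hge
      have h' : k ≤ (A₁ ∩ B).card + j * (n - 2 * k) := by
        have hjd : (j + 1) * (n - 2 * k) = j * (n - 2 * k) + (n - 2 * k) := by ring
        rcases le_total (n - 2 * k) (k - (A ∩ B).card) with hmin | hmin
        · rw [min_eq_left hmin] at hineq; omega
        · rw [min_eq_right hmin] at hineq; omega
      obtain ⟨p, hp⟩ := ih A₁ B hA₁ hB h'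
      refine ⟨SimpleGraph.Walk.cons (lg_adj hkn hA hB₁ hAB₁ _ (Or.inr hB₁))
        (SimpleGraph.Walk.cons ((lg_adj hkn hA₁ hB₁ hA₁B₁ (Or.inl hA₁) _).symm) p), ?_⟩
      erw [SimpleGraph.Walk.length_cons, SimpleGraph.Walk.length_cons]
      omega

lemma Pset_card (hkn : k < n - k) : (Pset n k).card = k := by
  have hk : k < n := by omega
  have : Pset n k = Finset.Iio ⟨k, hk⟩ := by
    ext x; simp [Pset, Fin.lt_def]
  rw [this, Fin.card_Iio]

end Aux

theorem levelGraph_diam (n k : ℕ) (hk : 0 < k) (hkn : k < n - k) :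
    (levelGraph n k).diam = 2 * ((k + (n - 2 * k) - 1) / (n - 2 * k)) + 1 := by
  generalize hD : n - 2 * k = d
  have hd0 : 0 < d := by omega
  have hdm := Nat.div_add_mod (k + d - 1) d
  have hmod : (k + d - 1) % d < d := Nat.mod_lt _ hd0
  generalize ht : (k + d - 1) / d = t
  rw [ht] at hdm
  have htd : k ≤ d * t := by omega
  have ht1 : 1 ≤ t := by
    rcases Nat.eq_zero_or_pos t with h0 | h1
    · rw [h0, Nat.mul_zero] at htd; omega
    · exact h1
  have key : ∀ m : ℕ, k ≤ m * d → t ≤ m := by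
    intro m hm
    by_contra hcon
    push_neg at hcon
    have h1 : d * (m + 1) ≤ d * t := Nat.mul_le_mul_left d (by omega)
    have h2 : d * (m + 1) = d * m + d := by ring
    have h3 : m * d = d * m := Nat.mul_comm m d
    omega
  have hcm : ∀ m : ℕ, m * d = d * m := fun m => Nat.mul_comm m d
  -- upper bound on all extended distances
  have all_le : ∀ u v : LevelVert n k,
      (levelGraph n k).edist u v ≤ ((2 * t + 1 : ℕ) : ℕ∞) := by
    intro u v
    obtain ⟨A, hA⟩ := u
    obtain ⟨B, hB⟩ := v
    rcases hA with hA | hA <;> rcases hB with hB | hB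
    · obtain ⟨p, hp⟩ := walk_ub2 hkn t A B hA hB (by rw [hD, hcm]; omega)
      have hle : p.length ≤ 2 * t + 1 := by omega
      exact le_trans (SimpleGraph.edist_le p) (Nat.cast_le.mpr hle)
    · obtain ⟨p, hp⟩ := walk_ub1 hkn t A B hA hB (by rw [hD, hcm]; omega)
      exact le_trans (SimpleGraph.edist_le p) (Nat.cast_le.mpr hp)
    · refine SimpleGraph.edist_comm.trans_le ?_
      obtain ⟨p, hp⟩ := walk_ub1 hkn t B A hB hA (by rw [hD, hcm]; omega)
      exact le_trans (SimpleGraph.edist_le p) (Nat.cast_le.mpr hp)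
    · -- both of cardinality n - k
      have hAB : d ≤ (A ∩ B).card := by
        have h1 : (A ∩ B).card + (A ∪ B).card = A.card + B.card :=
          Finset.card_inter_add_card_union A B
        have h2 : (A ∪ B).card ≤ n := by
          have := Finset.card_le_univ (A ∪ B)
          simpa using this
        omega
      obtain ⟨S, hSsub, hScard⟩ :=
        Finset.exists_subset_card_eq (s := A ∩ B) (n := min k ((A ∩ B).card)) (min_le_right _ _)
      obtain ⟨A₁, hA₁sup, hA₁sub, hA₁card⟩ :=
        Finset.exists_subsuperset_card_eq (n := k)
          (hSsub.trans Finset.inter_subset_left) (by rw [hScard]; exact min_le_left _ _)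
          (by omega)
      have hSA₁B : S ⊆ A₁ ∩ B :=
        Finset.subset_inter hA₁sup (hSsub.trans Finset.inter_subset_right)
      have hA₁B : min k ((A ∩ B).card) ≤ (A₁ ∩ B).card := by
        rw [← hScard]; exact Finset.card_le_card hSA₁B
      have h' : k ≤ (A₁ ∩ B).card + (t - 1) * (n - 2 * k) := by
        rw [hD]
        obtain ⟨s, rfl⟩ : ∃ s, t = s + 1 := ⟨t - 1, by omega⟩
        have hsd : (s + 1 - 1) * d = s * d := by norm_num
        rw [hsd]
        have hsd2 : d * (s + 1) = s * d + d := by ring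
        rcases le_total k ((A ∩ B).card) with hmin | hmin
        · rw [min_eq_left hmin] at hA₁B; omega
        · rw [min_eq_right hmin] at hA₁B; omega
      obtain ⟨p, hp⟩ := walk_ub1 hkn (t - 1) A₁ B hA₁card hB h'
      have hle : p.length + 1 ≤ 2 * t + 1 := by omega
      refine le_trans (SimpleGraph.edist_le
        (SimpleGraph.Walk.cons
          ((lg_adj hkn hA₁card hA hA₁sub (Or.inl hA₁card) (Or.inr hA)).symm) p)) ?_
      erw [SimpleGraph.Walk.length_cons]
      exact Nat.cast_le.mpr hle
  -- the extremal pair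
  have hPcard : (Pset n k).card = k := Pset_card hkn
  have hQcard : ((Pset n k)ᶜ).card = n - k := by
    rw [Finset.card_compl, hPcard]; simp
  have hlow : ((2 * t + 1 : ℕ) : ℕ∞) ≤
      (levelGraph n k).edist ⟨Pset n k, Or.inl hPcard⟩ ⟨(Pset n k)ᶜ, Or.inr hQcard⟩ := by
    refine le_of_le_of_eq ?_ SimpleGraph.edist_eq_sInf.symm
    refine le_sInf ?_
    rintro x ⟨p, rfl⟩
    refine Nat.cast_le.mpr ?_
    have h1 : k ≤ (Pset n k ∩ (Pset n k)ᶜ).card + p.length / 2 * (n - 2 * k) :=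
      (walk_lb hkn p).1 hPcard
    rw [hD] at h1
    have hint : (Pset n k ∩ (Pset n k)ᶜ).card = 0 := by
      rw [Finset.inter_compl]; simp
    have h4 := key (p.length / 2) (by omega)
    obtain ⟨m, hm⟩ := (walk_parity hkn p).1 hPcard hQcard
    omega
  have hediam : (levelGraph n k).ediam = ((2 * t + 1 : ℕ) : ℕ∞) :=
    le_antisymm (SimpleGraph.ediam_le_of_edist_le all_le)
      (le_trans hlow SimpleGraph.edist_le_ediam)
  rw [SimpleGraph.diam, hediam, ENat.toNat_coe]
end

section
/- Let t = n - 2k > 0, s = ⌈k/t⌉, P = {1,…,k}, and for 0 ≤ i ≤ s let Γ(i) = {A ∈ [X]^k : d(P,A) = 2i} where d is graph distance in L_{k,n}. Then |Γ(i)| = Σ_{j=1}^{t} C(k, k - ((i-1)t + j))·C(n-k, (i-1)t + j), where binomial coefficients with out-of-range arguments are 0. -/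
/-- Extended binomial coefficient: C(a,b) = 0 for b < 0 (and for b > a, via Nat.choose). -/
def C (a : ℕ) (b : ℤ) : ℕ := if 0 ≤ b then a.choose b.toNat else 0


lemma card_Pset (n k : ℕ) (hkn : k ≤ n) : (Pset n k).card = k := by
  conv_rhs => rw [← Finset.card_range k]
  refine Finset.card_nbij (s := Pset n k) (t := Finset.range k) (fun x => (x : ℕ)) ?_ ?_ ?_
  · intro a ha; simp [Pset] at ha ⊢; exact ha
  · intro a _ b _ h; exact Fin.val_injective h
  · intro a ha
    simp [Finset.mem_range] at ha
    exact ⟨⟨a, lt_of_lt_of_le ha hkn⟩, by simp [Pset, ha], rfl⟩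

lemma adj_of_k {n k : ℕ} (hkn : k < n - k) {u v : LevelVert n k}
    (h : (levelGraph n k).Adj u v) (hu : u.1.card = k) :
    v.1.card = n - k ∧ u.1 ⊆ v.1 := by
  rcases h.2 with ⟨h1, h2, h3⟩ | ⟨h1, h2, h3⟩
  · exact ⟨h2, h3⟩
  · rw [hu] at h2; omega

lemma adj_of_nk {n k : ℕ} (hkn : k < n - k) {u v : LevelVert n k}
    (h : (levelGraph n k).Adj u v) (hu : u.1.card = n - k) :
    v.1.card = k ∧ v.1 ⊆ u.1 := by
  rcases h.2 with ⟨h1, h2, h3⟩ | ⟨h1, h2, h3⟩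
  · rw [hu] at h1; omega
  · exact ⟨h1, h3⟩

lemma walk_sdiff_le (n k : ℕ) (hkn : k < n - k) (Q : Finset (Fin n)) :
    ∀ L : ℕ, ∀ (u v : LevelVert n k) (W : (levelGraph n k).Walk u v),
      W.length = L → u.1.card = k → v.1.card = k →
      (Q \ v.1).card ≤ (Q \ u.1).card + (L / 2) * (n - 2 * k) := by
  intro L
  induction L using Nat.strong_induction_on with
  | _ L ih =>
    intro u v W hL hu hv
    cases W with
    | nil =>
      simp only [SimpleGraph.Walk.length_nil] at hL
      subst hL; simp
    | @cons _ b _ h W' =>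
      obtain ⟨hb, hub⟩ := adj_of_k hkn h hu
      cases W' with
      | nil => rw [hv] at hb; omega
      | @cons _ c _ h2 W'' =>
        obtain ⟨hc, hcb⟩ := adj_of_nk hkn h2 hb
        have key : (Q \ c.1).card ≤ (Q \ u.1).card + (n - 2 * k) := by
          calc (Q \ c.1).card ≤ ((Q \ b.1) ∪ (b.1 \ c.1)).card := by
                apply Finset.card_le_card
                intro x hx
                simp only [Finset.mem_sdiff, Finset.mem_union] at hx ⊢
                by_cases hxb : x ∈ b.1
                · exact Or.inr ⟨hxb, hx.2⟩
                · exact Or.inl ⟨hx.1, hxb⟩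
            _ ≤ (Q \ b.1).card + (b.1 \ c.1).card := Finset.card_union_le _ _
            _ ≤ (Q \ u.1).card + (n - 2 * k) := by
                apply add_le_add
                · exact Finset.card_le_card (Finset.sdiff_subset_sdiff (le_refl Q) hub)
                · rw [Finset.card_sdiff_of_subset hcb, hb, hc]; omega
        have hlen : W''.length + 2 = L := by
          simp only [SimpleGraph.Walk.length_cons] at hL; omega
        have ihh := ih W''.length (by omega) c v W'' rfl hc hv
        have hdiv : L / 2 = W''.length / 2 + 1 := by omega
        rw [hdiv, add_mul, one_mul]
        omega

lemma exists_walk_aux (n k : ℕ) (hk : 0 < k) (hkn : k < n - k)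
    (P : LevelVert n k) (hP : P.1 = Pset n k) :
    ∀ m : ℕ, ∀ A : LevelVert n k, A.1.card = k → (Pset n k \ A.1).card = m →
      ∃ W : (levelGraph n k).Walk P A,
        W.length = 2 * ((m + (n - 2 * k) - 1) / (n - 2 * k)) := by
  have ht : 0 < n - 2 * k := by omega
  have hkc : (Pset n k).card = k := card_Pset n k (by omega)
  intro m
  induction m using Nat.strong_induction_on with
  | _ m ih =>
    intro A hA hm
    rcases Nat.eq_zero_or_pos m with hm0 | hm0
    · subst hm0
      have hPA : A = P := by
        have hsub : Pset n k ⊆ A.1 := by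
          rw [← Finset.sdiff_eq_empty_iff_subset, ← Finset.card_eq_zero]; exact hm
        have : Pset n k = A.1 :=
          Finset.eq_of_subset_of_card_le hsub (by rw [hA, hkc])
        exact Subtype.ext (by rw [hP, this])
      subst hPA
      exact ⟨SimpleGraph.Walk.nil, by rw [Nat.div_eq_of_lt (by omega)]; rfl⟩
    · set t := n - 2 * k with htdef
      set t' := min m t with ht'
      have ht'1 : 1 ≤ t' := by omega
      have hmk : m ≤ k := by
        rw [← hm]
        calc (Pset n k \ A.1).card ≤ (Pset n k).card :=
              Finset.card_le_card Finset.sdiff_subset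
          _ = k := hkc
      obtain ⟨S, hSsub, hScard⟩ := Finset.exists_subset_card_eq (show t' ≤ (Pset n k \ A.1).card by omega)
      have hAPcard : (A.1 \ Pset n k).card = m := by
        rw [Finset.card_sdiff_comm (by rw [hA, hkc])]; exact hm
      obtain ⟨T, hTsub, hTcard⟩ := Finset.exists_subset_card_eq (show t' ≤ (A.1 \ Pset n k).card by omega)
      have hSA : Disjoint S A.1 := by
        rw [Finset.disjoint_left]
        intro x hx hx2
        exact (Finset.mem_sdiff.1 (hSsub hx)).2 hx2
      set A' := (A.1 \ T) ∪ S with hA'def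
      have hTA : T ⊆ A.1 := fun x hx => (Finset.mem_sdiff.1 (hTsub hx)).1
      have ht'k : t' ≤ k := by omega
      have hA'card : A'.card = k := by
        rw [Finset.card_union_of_disjoint (Finset.disjoint_of_subset_right Finset.sdiff_subset hSA).symm,
          Finset.card_sdiff_of_subset hTA, hA, hScard, hTcard]
        omega
      have hPA' : Pset n k \ A' = (Pset n k \ A.1) \ S := by
        ext x
        by_cases hxP : x ∈ Pset n k
        · have hxT : x ∉ T := fun hxT => (Finset.mem_sdiff.1 (hTsub hxT)).2 hxP
          simp [hA'def, Finset.mem_sdiff, Finset.mem_union, hxP, hxT]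
          try tauto
        · simp [Finset.mem_sdiff, hxP]
      have hPA'card : (Pset n k \ A').card = m - t' := by
        rw [hPA', Finset.card_sdiff_of_subset hSsub, hm, hScard]
      -- build B
      have hAScard : (A.1 ∪ S).card = k + t' := by
        rw [Finset.card_union_of_disjoint hSA.symm, hA, hScard]
      obtain ⟨B, hBsub, hBcard⟩ := Finset.exists_superset_card_eq
        (s := A.1 ∪ S) (n := n - k) (by omega) (by simp only [Fintype.card_fin]; omega)
      have hA'B : A' ⊆ B := by
        intro x hx
        rcases Finset.mem_union.1 hx with hx | hx
        · exact hBsub (Finset.mem_union_left _ (Finset.sdiff_subset hx))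
        · exact hBsub (Finset.mem_union_right _ hx)
      have hAB : A.1 ⊆ B := fun x hx => hBsub (Finset.mem_union_left _ hx)
      set vA' : LevelVert n k := ⟨A', Or.inl hA'card⟩ with hvA'
      set vB : LevelVert n k := ⟨B, Or.inr hBcard⟩ with hvB
      have adj1 : (levelGraph n k).Adj vA' vB := by
        refine ⟨fun h => ?_, Or.inl ⟨hA'card, hBcard, hA'B⟩⟩
        have h2 : A'.card = B.card := congrArg Finset.card (congrArg Subtype.val h)
        rw [hA'card, hBcard] at h2; omega
      have adj2 : (levelGraph n k).Adj vB A := by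
        refine ⟨fun h => ?_, Or.inr ⟨hA, hBcard, hAB⟩⟩
        have h2 : B.card = A.1.card := congrArg Finset.card (congrArg Subtype.val h)
        rw [hBcard, hA] at h2; omega
      obtain ⟨W', hW'⟩ := ih (m - t') (by omega) vA' hA'card hPA'card
      refine ⟨W'.append ((SimpleGraph.Walk.cons adj1 (SimpleGraph.Walk.cons adj2 SimpleGraph.Walk.nil))), ?_⟩
      rw [SimpleGraph.Walk.length_append, hW']
      simp only [SimpleGraph.Walk.length_cons, SimpleGraph.Walk.length_nil]
      have harith : (m - t' + t - 1) / t + 1 = (m + t - 1) / t := by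
        rcases le_or_gt m t with hmt | hmt
        · have h1 : t' = m := by omega
          rw [h1, Nat.sub_self, Nat.zero_add, Nat.div_eq_of_lt (by omega)]
          have : (m + t - 1) / t = 1 := by
            apply Nat.div_eq_of_lt_le <;> omega
          omega
        · have h1 : t' = t := by omega
          have h2 : m - t' + t - 1 = m - 1 := by omega
          have h3 : m + t - 1 = (m - 1) + t := by omega
          rw [h2, h3, Nat.add_div_right _ ht]
      omega

lemma dist_eq (n k : ℕ) (hk : 0 < k) (hkn : k < n - k)
    (P : LevelVert n k) (hP : P.1 = Pset n k)
    (A : LevelVert n k) (hA : A.1.card = k) :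
    (levelGraph n k).dist P A =
      2 * (((Pset n k \ A.1).card + (n - 2 * k) - 1) / (n - 2 * k)) := by
  have ht : 0 < n - 2 * k := by omega
  obtain ⟨W, hW⟩ := exists_walk_aux n k hk hkn P hP (Pset n k \ A.1).card A hA rfl
  apply le_antisymm
  · exact hW ▸ SimpleGraph.dist_le W
  · have hreach : (levelGraph n k).Reachable P A := ⟨W⟩
    obtain ⟨Wd, hWd⟩ := hreach.exists_walk_length_eq_dist
    have hPk : P.1.card = k := by rw [hP]; exact card_Pset n k (by omega)
    have hlow := walk_sdiff_le n k hkn (Pset n k) Wd.length P A Wd rfl hPk hA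
    rw [hP, Finset.sdiff_self, Finset.card_empty, Nat.zero_add, hWd] at hlow
    set t := n - 2 * k with htdef
    set m := (Pset n k \ A.1).card with hmdef
    set d := (levelGraph n k).dist P A with hd
    set q := d / 2 with hq
    -- hlow : m ≤ q * t
    have h1 : (m + t - 1) / t ≤ q := by
      have h3 : m + t - 1 ≤ q * t + t - 1 :=
        Nat.sub_le_sub_right (Nat.add_le_add_right hlow t) 1
      calc (m + t - 1) / t ≤ (q * t + t - 1) / t := Nat.div_le_div_right h3
        _ = q := by
            rw [Nat.add_sub_assoc (by omega) (q * t), mul_comm q t,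
              Nat.mul_add_div ht, Nat.div_eq_of_lt (by omega), Nat.add_zero]
    omega

lemma count_m (n k m : ℕ) (hkn : k ≤ n) :
    (Finset.univ.filter
        (fun B : Finset (Fin n) => B.card = k ∧ (Pset n k \ B).card = m)).card
      = k.choose m * (n - k).choose m := by
  have hkc : (Pset n k).card = k := card_Pset n k hkn
  have hcompl : ((Pset n k)ᶜ : Finset (Fin n)).card = n - k := by
    rw [Finset.card_compl, hkc, Fintype.card_fin]
  have hprod : (((Pset n k).powersetCard m) ×ˢ (((Pset n k)ᶜ).powersetCard m)).card
      = k.choose m * (n - k).choose m := by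
    rw [Finset.card_product, Finset.card_powersetCard, Finset.card_powersetCard, hkc, hcompl]
  rw [← hprod]
  apply Finset.card_nbij' (fun B => (Pset n k \ B, B \ Pset n k))
    (fun DE => (Pset n k \ DE.1) ∪ DE.2)
  · intro B hB
    simp only [Finset.mem_coe, Finset.mem_filter, Finset.mem_univ, true_and] at hB
    simp only [Finset.mem_coe, Finset.mem_product, Finset.mem_powersetCard]
    refine ⟨⟨Finset.sdiff_subset, hB.2⟩, ⟨?_, ?_⟩⟩
    · intro x hx
      simp only [Finset.mem_compl]
      exact (Finset.mem_sdiff.1 hx).2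
    · rw [Finset.card_sdiff_comm (by rw [hB.1, hkc])]; exact hB.2
  · rintro ⟨D, E⟩ hDE
    simp only [Finset.mem_coe, Finset.mem_product, Finset.mem_powersetCard] at hDE
    obtain ⟨⟨hD, hDc⟩, hE, hEc⟩ := hDE
    have hmk : m ≤ k := by rw [← hDc, ← hkc]; exact Finset.card_le_card hD
    have hdisj : Disjoint (Pset n k \ D) E := by
      rw [Finset.disjoint_left]
      intro x hx hxE
      exact (Finset.mem_compl.1 (hE hxE)) (Finset.mem_sdiff.1 hx).1
    have hPB : Pset n k \ (Pset n k \ D ∪ E) = D := by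
      ext x
      simp only [Finset.mem_sdiff, Finset.mem_union, not_or, not_and, not_not]
      constructor
      · rintro ⟨hxP, h1, h2⟩; exact h1 hxP
      · intro hxD
        have hxP : x ∈ Pset n k := hD hxD
        exact ⟨hxP, fun _ => hxD, fun hxE => (Finset.mem_compl.1 (hE hxE)) hxP⟩
    simp only [Finset.mem_coe, Finset.mem_filter, Finset.mem_univ, true_and]
    constructor
    · rw [Finset.card_union_of_disjoint hdisj, Finset.card_sdiff_of_subset hD, hkc, hDc, hEc]
      omega
    · rw [hPB]; exact hDc
  · intro B hB
    simp only [Finset.mem_coe, Finset.mem_filter, Finset.mem_univ, true_and] at hB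
    ext x
    simp only [Finset.mem_union, Finset.mem_sdiff, not_and, not_not]
    constructor
    · rintro (⟨hxP, h⟩ | ⟨hxB, _⟩)
      · exact h hxP
      · exact hxB
    · intro hxB
      by_cases hxP : x ∈ Pset n k
      · exact Or.inl ⟨hxP, fun _ => hxB⟩
      · exact Or.inr ⟨hxB, hxP⟩
  · rintro ⟨D, E⟩ hDE
    simp only [Finset.mem_coe, Finset.mem_product, Finset.mem_powersetCard] at hDE
    obtain ⟨⟨hD, hDc⟩, hE, hEc⟩ := hDE
    have h1 : Pset n k \ (Pset n k \ D ∪ E) = D := by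
      ext x
      simp only [Finset.mem_sdiff, Finset.mem_union, not_or, not_and, not_not]
      constructor
      · rintro ⟨hxP, h1, h2⟩; exact h1 hxP
      · intro hxD
        have hxP : x ∈ Pset n k := hD hxD
        exact ⟨hxP, fun _ => hxD, fun hxE => (Finset.mem_compl.1 (hE hxE)) hxP⟩
    have h2 : (Pset n k \ D ∪ E) \ Pset n k = E := by
      ext x
      simp only [Finset.mem_sdiff, Finset.mem_union]
      constructor
      · rintro ⟨hx1 | hxE, hxP⟩
        · exact absurd hx1.1 hxP
        · exact hxE
      · intro hxE
        exact ⟨Or.inr hxE, fun hxP => (Finset.mem_compl.1 (hE hxE)) hxP⟩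
    rw [Prod.ext_iff]
    exact ⟨h1, h2⟩

lemma ceil_zero_iff (t m : ℕ) (ht : 0 < t) : (m + t - 1) / t = 0 ↔ m = 0 := by
  constructor
  · intro h
    by_contra hm
    have h1 : 1 * t ≤ m + t - 1 := by omega
    have := (Nat.le_div_iff_mul_le ht).2 h1
    omega
  · intro h; subst h; exact Nat.div_eq_of_lt (by omega)

lemma ceil_succ_iff (t m i : ℕ) (ht : 0 < t) :
    (m + t - 1) / t = i + 1 ↔ i * t + 1 ≤ m ∧ m ≤ (i + 1) * t := by
  obtain ⟨p, hp⟩ : ∃ p, i * t = p := ⟨_, rfl⟩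
  have e1 : (i + 1) * t = p + t := by rw [← hp]; ring
  have e2 : (i + 1 + 1) * t = p + 2 * t := by rw [← hp]; ring
  constructor
  · intro h
    have h1 := Nat.div_mul_le_self (m + t - 1) t
    rw [h] at h1
    have h2 : m + t - 1 < (i + 1 + 1) * t := (Nat.div_lt_iff_lt_mul ht).1 (by omega)
    rw [e1] at h1; rw [e2] at h2
    rw [hp, e1]
    omega
  · rintro ⟨h1, h2⟩
    rw [hp] at h1; rw [e1] at h2
    apply Nat.div_eq_of_lt_le
    · rw [e1]; omega
    · rw [e2]; omega

lemma C_natCast (a M : ℕ) : C a (M : ℤ) = a.choose M := by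
  simp [C]

lemma C_sub (a M : ℕ) : C a ((a : ℤ) - M) = a.choose M := by
  rcases le_or_gt M a with h | h
  · rw [C, if_pos (by omega)]
    have h2 : ((a : ℤ) - M).toNat = a - M := by omega
    rw [h2, Nat.choose_symm h]
  · rw [C, if_neg (by omega), eq_comm]
    exact Nat.choose_eq_zero_of_lt h

lemma rhs_zero (k nk t : ℕ) (ht : 0 < t) :
    ∑ j ∈ Finset.Icc 1 t,
      C k ((k : ℤ) - (((0 : ℤ) - 1) * t + j)) * C nk (((0 : ℤ) - 1) * t + j) = 1 := by
  rw [Finset.sum_eq_single_of_mem t (Finset.mem_Icc.2 ⟨ht, le_refl t⟩)]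
  · have h0 : ((0 : ℤ) - 1) * t + t = 0 := by ring
    rw [h0, sub_zero]
    rw [show ((k : ℤ)) = ((k : ℕ) : ℤ) from rfl, C_natCast,
      show ((0 : ℤ)) = ((0 : ℕ) : ℤ) from rfl, C_natCast]
    simp
  · intro j hj hne
    have hj' := Finset.mem_Icc.1 hj
    have h0 : ¬ (0 : ℤ) ≤ ((0 : ℤ) - 1) * t + j := by
      have : (j : ℤ) < t := by
        have : j < t := lt_of_le_of_ne hj'.2 hne
        exact_mod_cast this
      omega
    have hz : C nk (((0 : ℤ) - 1) * t + j) = 0 := by rw [C, if_neg h0]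
    rw [hz, mul_zero]

lemma rhs_succ (k nk t i : ℕ) (ht : 0 < t) :
    ∑ j ∈ Finset.Icc 1 t,
        C k ((k : ℤ) - ((i : ℤ) * t + j)) * C nk ((i : ℤ) * t + j)
      = ∑ m ∈ Finset.Icc (i * t + 1) ((i + 1) * t), k.choose m * nk.choose m := by
  obtain ⟨p, hp⟩ : ∃ p, i * t = p := ⟨_, rfl⟩
  have e1 : (i + 1) * t = p + t := by rw [← hp]; ring
  have hpz : (i : ℤ) * t = (p : ℤ) := by rw [← hp]; push_cast; ring
  rw [e1, hp, hpz]
  refine Finset.sum_nbij' (fun j => p + j) (fun m => m - p) ?_ ?_ ?_ ?_ ?_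
  · intro j hj; have := Finset.mem_Icc.1 hj; rw [Finset.mem_Icc]; omega
  · intro m hm; have := Finset.mem_Icc.1 hm; rw [Finset.mem_Icc]; omega
  · intro j hj; have := Finset.mem_Icc.1 hj; omega
  · intro m hm; have := Finset.mem_Icc.1 hm; omega
  · intro j hj
    have hcast : (p : ℤ) + j = ((p + j : ℕ) : ℤ) := by push_cast; ring
    rw [hcast, C_natCast, C_sub]


theorem card_Gamma (n k : ℕ) (hk : 0 < k) (hkn : k < n - k)
    (P : LevelVert n k) (hP : P.1 = Pset n k)
    (i : ℕ) (hi : i ≤ (k + (n - 2 * k) - 1) / (n - 2 * k)) :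
    Nat.card {A : LevelVert n k //
        A.1.card = k ∧ (levelGraph n k).dist P A = 2 * i} =
      ∑ j ∈ Finset.Icc 1 (n - 2 * k),
        C k ((k : ℤ) - (((i : ℤ) - 1) * (n - 2 * k) + j)) *
        C (n - k) (((i : ℤ) - 1) * (n - 2 * k) + j) := by
  have ht : 0 < n - 2 * k := by omega
  have hcast : ((n : ℤ) - 2 * k) = ((n - 2 * k : ℕ) : ℤ) := by omega
  have hdist : ∀ A : LevelVert n k, A.1.card = k →
      ((levelGraph n k).dist P A = 2 * i ↔
        ((Pset n k \ A.1).card + (n - 2 * k) - 1) / (n - 2 * k) = i) := by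
    intro A hA
    rw [dist_eq n k hk hkn P hP A hA]
    omega
  have step1 : Nat.card {A : LevelVert n k //
        A.1.card = k ∧ (levelGraph n k).dist P A = 2 * i}
      = (Finset.univ.filter (fun B : Finset (Fin n) =>
          B.card = k ∧
            ((Pset n k \ B).card + (n - 2 * k) - 1) / (n - 2 * k) = i)).card := by
    have e : {A : LevelVert n k //
          A.1.card = k ∧ (levelGraph n k).dist P A = 2 * i} ≃
        {B : Finset (Fin n) //
          B.card = k ∧ ((Pset n k \ B).card + (n - 2 * k) - 1) / (n - 2 * k) = i} :=
      { toFun := fun A => ⟨A.1.1, A.2.1, (hdist A.1 A.2.1).1 A.2.2⟩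
        invFun := fun B =>
          ⟨⟨B.1, Or.inl B.2.1⟩, B.2.1, (hdist ⟨B.1, Or.inl B.2.1⟩ B.2.1).2 B.2.2⟩
        left_inv := fun A => rfl
        right_inv := fun B => rfl }
    rw [Nat.card_congr e, Nat.card_eq_fintype_card, Fintype.card_subtype]
  rw [step1]
  cases i with
  | zero =>
    have hfilter : (Finset.univ.filter (fun B : Finset (Fin n) =>
        B.card = k ∧ ((Pset n k \ B).card + (n - 2 * k) - 1) / (n - 2 * k) = 0))
        = {Pset n k} := by
      ext B
      simp only [Finset.mem_filter, Finset.mem_univ, true_and, Finset.mem_singleton]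
      constructor
      · rintro ⟨hBk, hc⟩
        have h0 : (Pset n k \ B).card = 0 := (ceil_zero_iff _ _ ht).1 hc
        have hsub : Pset n k ⊆ B := by
          rw [← Finset.sdiff_eq_empty_iff_subset, ← Finset.card_eq_zero]; exact h0
        exact (Finset.eq_of_subset_of_card_le hsub
          (by rw [hBk, card_Pset n k (by omega)])).symm
      · rintro rfl
        refine ⟨card_Pset n k (by omega), ?_⟩
        rw [Finset.sdiff_self, Finset.card_empty]
        exact (ceil_zero_iff _ _ ht).2 rfl
    rw [hfilter, Finset.card_singleton]
    simp only [Nat.cast_zero, hcast]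
    exact (rhs_zero k (n - k) (n - 2 * k) ht).symm
  | succ i' =>
    have hmap : ∀ B ∈ (Finset.univ.filter (fun B : Finset (Fin n) =>
        B.card = k ∧
          ((Pset n k \ B).card + (n - 2 * k) - 1) / (n - 2 * k) = i' + 1)),
        (Pset n k \ B).card ∈
          Finset.Icc (i' * (n - 2 * k) + 1) ((i' + 1) * (n - 2 * k)) := by
      intro B hB
      simp only [Finset.mem_filter, Finset.mem_univ, true_and] at hB
      rw [Finset.mem_Icc]
      have := (ceil_succ_iff (n - 2 * k) (Pset n k \ B).card i' ht).1 hB.2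
      omega
    rw [Finset.card_eq_sum_card_fiberwise hmap]
    have stepL : ∑ m ∈ Finset.Icc (i' * (n - 2 * k) + 1) ((i' + 1) * (n - 2 * k)),
        (Finset.filter (fun B => (Pset n k \ B).card = m)
          (Finset.univ.filter (fun B : Finset (Fin n) =>
            B.card = k ∧
              ((Pset n k \ B).card + (n - 2 * k) - 1) / (n - 2 * k) = i' + 1))).card
        = ∑ m ∈ Finset.Icc (i' * (n - 2 * k) + 1) ((i' + 1) * (n - 2 * k)),
            k.choose m * (n - k).choose m := by
      apply Finset.sum_congr rfl
      intro m hm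
      rw [Finset.filter_filter]
      have hfeq : Finset.filter (fun B : Finset (Fin n) =>
            (B.card = k ∧
              ((Pset n k \ B).card + (n - 2 * k) - 1) / (n - 2 * k) = i' + 1) ∧
            (Pset n k \ B).card = m) Finset.univ
          = Finset.filter (fun B : Finset (Fin n) =>
              B.card = k ∧ (Pset n k \ B).card = m) Finset.univ := by
        apply Finset.filter_congr
        intro B _
        have hm' := Finset.mem_Icc.1 hm
        constructor
        · rintro ⟨⟨h1, _⟩, h3⟩; exact ⟨h1, h3⟩
        · rintro ⟨h1, h3⟩
          refine ⟨⟨h1, ?_⟩, h3⟩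
          rw [h3]
          exact (ceil_succ_iff (n - 2 * k) m i' ht).2 (by omega)
      rw [hfeq]
      exact count_m n k m (by omega)
    rw [stepL]
    have hcasti : ((i' + 1 : ℕ) : ℤ) - 1 = (i' : ℤ) := by push_cast; ring
    simp only [hcasti, hcast]
    exact (rhs_succ k (n - k) (n - 2 * k) i' ht).symm
end
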